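/- Let α and β be linear subspaces of ℝⁿ with dim α < dim β. Then for any d > 1 and C₁, C₂ > 0, the ratio vol(ST_d(α;C₁) ∩ B_ε(0)) / vol(ST_d(β;C₂) ∩ B_ε(0)) tends to 0 as ε → 0, where vol denotes Lebesgue measure and B_ε(0) is the ball of radius ε about the origin. -/

import Mathlib

open Filter Metric Topology MeasureTheory

noncomputable section

abbrev E (n : ℕ) := EuclideanSpace ℝ (Fin n)

/-- Direction set of `A` at the origin. -/
def Dir (n : ℕ) (A : Set (E n)) : Set (E n) :=
  {a | ‖a‖ = 1 ∧ ∃ x : ℕ → E n, (∀ i, x i ∈ A \ {0}) ∧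
    Tendsto x atTop (nhds (0 : E n)) ∧
    Tendsto (fun i => (‖x i‖)⁻¹ • x i) atTop (nhds a)}

/-- Sea-tangle neighbourhood of degree `d` and width `C`. -/
def STg (n : ℕ) (d C : ℝ) (A : Set (E n)) : Set (E n) :=
  {x | Metric.infDist x A ≤ C * ‖x‖ ^ d}

/-- Cone over the direction set (real tangent cone). -/
def LD (n : ℕ) (A : Set (E n)) : Set (E n) :=
  {x | ∃ a ∈ Dir n A, ∃ t : ℝ, 0 ≤ t ∧ x = t • a}

/-- Sequence selection property. -/
def SSP (n : ℕ) (S : Set (E n)) : Prop :=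
  ∀ a : ℕ → E n, (∀ m, a m ≠ 0) → Tendsto a atTop (nhds (0 : E n)) →
    (∃ L ∈ Dir n S, Tendsto (fun m => (‖a m‖)⁻¹ • a m) atTop (nhds L)) →
    ∀ ε > (0:ℝ), ∃ b : ℕ → E n, (∀ m, b m ∈ S) ∧
      ∀ᶠ m in atTop, ‖a m - b m‖ ≤ ε * min ‖a m‖ ‖b m‖

/-- ST-equivalence of set-germs at the origin. -/
def STEquiv (n : ℕ) (A B : Set (E n)) : Prop :=
  ∃ d₁ > (1:ℝ), ∃ C₁ > (0:ℝ), ∃ d₂ > (1:ℝ), ∃ C₂ > (0:ℝ), ∃ ε > (0:ℝ),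
    B ∩ ball (0 : E n) ε ⊆ STg n d₁ C₁ A ∧ A ∩ ball (0 : E n) ε ⊆ STg n d₂ C₂ B

namespace STAux

open Module

variable {n : ℕ}

lemma norm_sq_add (K : Submodule ℝ (E n)) (u : K) (v : Kᗮ) :
    ‖(u : E n) + (v : E n)‖ ^ 2 = ‖u‖ ^ 2 + ‖v‖ ^ 2 := by
  have h : (inner ℝ ((u : E n)) ((v : E n)) : ℝ) = 0 :=
    Submodule.inner_right_of_mem_orthogonal u.2 v.2
  rw [norm_add_sq_real, h]
  simp [Submodule.coe_norm]

lemma norm_fst_le (K : Submodule ℝ (E n)) (u : K) (v : Kᗮ) :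
    ‖u‖ ≤ ‖(u : E n) + (v : E n)‖ := by
  have h := norm_sq_add K u v
  nlinarith [norm_nonneg u, norm_nonneg v, norm_nonneg ((u : E n) + (v : E n))]

lemma infDist_add (K : Submodule ℝ (E n)) (u : K) (v : Kᗮ) :
    Metric.infDist ((u : E n) + (v : E n)) (K : Set (E n)) = ‖v‖ := by
  have hproj : (K.orthogonalProjectionOnto ((u : E n) + (v : E n)) : E n) = u := by
    rw [map_add, Submodule.orthogonalProjectionOnto_mem_subspace_eq_self,
      Submodule.orthogonalProjectionOnto_apply_of_mem_orthogonal v.2]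
    simp
  have hmin := Submodule.starProjection_minimal (U := K) ((u : E n) + (v : E n))
  rw [Submodule.starProjection_apply, hproj] at hmin
  have : Metric.infDist ((u : E n) + (v : E n)) (K : Set (E n)) =
      ⨅ y : K, dist ((u : E n) + (v : E n)) y := Metric.infDist_eq_iInf
  rw [this]
  simp only [dist_eq_norm]
  rw [← hmin]
  simp

set_option maxHeartbeats 1000000 in
/-- The addition map `K × Kᗮ → E n` is measure preserving. -/
lemma measurePreserving_add (K : Submodule ℝ (E n)) :
    MeasurePreserving (fun p : K × Kᗮ => (p.1 : E n) + (p.2 : E n))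
      ((volume : Measure K).prod (volume : Measure Kᗮ)) volume := by
  have hcompl : IsCompl K Kᗮ := K.isCompl_orthogonal_of_hasOrthogonalProjection
  set L : (K × Kᗮ) ≃ₗ[ℝ] E n := Submodule.prodEquivOfIsCompl K Kᗮ hcompl with hLdef
  have hLapp : ∀ p : K × Kᗮ, L p = (p.1 : E n) + (p.2 : E n) := fun p =>
    Submodule.coe_prodEquivOfIsCompl' K Kᗮ hcompl p
  let v := stdOrthonormalBasis ℝ K
  let w := stdOrthonormalBasis ℝ Kᗮ
  set b : Basis (Fin (finrank ℝ K) ⊕ Fin (finrank ℝ Kᗮ)) ℝ (E n) :=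
    (v.toBasis.prod w.toBasis).map L with hbdef
  have hb : Orthonormal ℝ b := by
    rw [orthonormal_iff_ite]
    intro i j
    have happ : ∀ i, b i = Sum.elim (fun i => (v i : E n)) (fun j => (w j : E n)) i := by
      rintro (i | i) <;>
        simp [hbdef, Basis.prod_apply, hLapp, Sum.elim_inl, Sum.elim_inr]
    rw [happ i, happ j]
    have hvv := v.orthonormal
    have hww := w.orthonormal
    rw [orthonormal_iff_ite] at hvv hww
    rcases i with i | i <;> rcases j with j | j
    · simp only [Sum.elim_inl]
      rw [← Submodule.coe_inner, hvv i j]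
      simp
    · simp only [Sum.elim_inl, Sum.elim_inr]
      rw [Submodule.inner_right_of_mem_orthogonal (v i).2 (w j).2]
      simp
    · simp only [Sum.elim_inl, Sum.elim_inr]
      rw [inner_eq_zero_symm.2 (Submodule.inner_right_of_mem_orthogonal (v j).2 (w i).2)]
      simp
    · simp only [Sum.elim_inr]
      rw [← Submodule.coe_inner, hww i j]
      simp
  have hbvol : b.addHaar = volume := by
    have h1 := (b.toOrthonormalBasis hb).addHaar_eq_volume
    rwa [Basis.toBasis_toOrthonormalBasis] at h1
  have hprod : (v.toBasis.prod w.toBasis).addHaar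
      = (volume : Measure K).prod (volume : Measure Kᗮ) := by
    rw [Basis.prod_addHaar, v.addHaar_eq_volume, w.addHaar_eq_volume]
  have hmap := Basis.map_addHaar (v.toBasis.prod w.toBasis) L.toContinuousLinearEquiv
  refine ⟨?_, ?_⟩
  · exact (continuous_subtype_val.comp continuous_fst).add
      (continuous_subtype_val.comp continuous_snd) |>.measurable
  · have hcoe : (fun p : K × Kᗮ => (p.1 : E n) + (p.2 : E n))
        = ⇑L.toContinuousLinearEquiv := by
      funext p
      rw [LinearEquiv.coe_toContinuousLinearEquiv', hLapp]
    rw [hcoe, ← hprod, hmap]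
    have : (v.toBasis.prod w.toBasis).map L.toContinuousLinearEquiv.toLinearEquiv = b := by
      rw [hbdef]
      congr 1
    rw [this, hbvol]

/-- Volume of a ball in a finite-dimensional inner product space. -/
lemma vol_ball (F : Type*) [NormedAddCommGroup F] [InnerProductSpace ℝ F]
    [FiniteDimensional ℝ F] [MeasurableSpace F] [BorelSpace F] {r : ℝ} (hr : 0 < r) :
    volume (ball (0 : F) r) = ENNReal.ofReal (r ^ finrank ℝ F) * volume (ball (0 : F) 1) := by
  rcases subsingleton_or_nontrivial F with h | h
  · have huniv : ∀ s : ℝ, 0 < s → ball (0 : F) s = Set.univ := by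
      intro s hs
      ext x
      simp [Subsingleton.elim x 0, hs]
    have h0 : finrank ℝ F = 0 := Module.finrank_zero_of_subsingleton
    rw [huniv r hr, huniv 1 one_pos, h0, pow_zero, ENNReal.ofReal_one, one_mul]
  · exact Measure.addHaar_ball volume 0 hr.le

lemma tube_upper (K : Submodule ℝ (E n)) {δ ε : ℝ} (hδ : 0 ≤ δ) (hε : 0 < ε) :
    volume ({x : E n | Metric.infDist x (K : Set (E n)) ≤ δ} ∩ ball 0 ε)
      ≤ ENNReal.ofReal (ε ^ finrank ℝ K) * volume (ball (0 : K) 1)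
        * (ENNReal.ofReal (δ ^ finrank ℝ Kᗮ) * volume (ball (0 : Kᗮ) 1)) := by
  have hmeas : MeasurableSet ({x : E n | Metric.infDist x (K : Set (E n)) ≤ δ} ∩ ball 0 ε) :=
    ((isClosed_le (continuous_infDist_pt _) continuous_const).measurableSet).inter
      measurableSet_ball
  rw [← (measurePreserving_add K).measure_preimage hmeas.nullMeasurableSet]
  have hsub : (fun p : K × Kᗮ => (p.1 : E n) + (p.2 : E n)) ⁻¹'
      ({x : E n | Metric.infDist x (K : Set (E n)) ≤ δ} ∩ ball 0 ε)
      ⊆ (ball (0 : K) ε) ×ˢ (closedBall (0 : Kᗮ) δ) := by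
    rintro ⟨u, vv⟩ ⟨h1, h2⟩
    simp only [Set.mem_setOf_eq] at h1
    rw [infDist_add] at h1
    simp only [mem_ball_zero_iff] at h2
    exact ⟨mem_ball_zero_iff.2 ((norm_fst_le K u vv).trans_lt h2),
      mem_closedBall_zero_iff.2 h1⟩
  calc ((volume : Measure K).prod (volume : Measure Kᗮ)) ((fun p : K × Kᗮ =>
        (p.1 : E n) + (p.2 : E n)) ⁻¹' ({x : E n |
          Metric.infDist x (K : Set (E n)) ≤ δ} ∩ ball 0 ε))
      ≤ ((volume : Measure K).prod (volume : Measure Kᗮ))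
          ((ball (0 : K) ε) ×ˢ (closedBall (0 : Kᗮ) δ)) := measure_mono hsub
    _ = volume (ball (0 : K) ε) * volume (closedBall (0 : Kᗮ) δ) := by
        rw [Measure.prod_prod]
    _ = ENNReal.ofReal (ε ^ finrank ℝ K) * volume (ball (0 : K) 1)
        * (ENNReal.ofReal (δ ^ finrank ℝ Kᗮ) * volume (ball (0 : Kᗮ) 1)) := by
        rw [vol_ball K hε, Measure.addHaar_closedBall volume 0 hδ]

lemma tube_lower (K : Submodule ℝ (E n)) {s : Set (E n)} (hs : MeasurableSet s)
    {ε δ : ℝ} (hε : 0 < ε) (hδ : 0 < δ)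
    (hsub : ∀ (u : K) (v : Kᗮ), ‖u‖ < 3 * ε / 4 → ε / 2 ≤ ‖u‖ → ‖v‖ < δ →
      (u : E n) + (v : E n) ∈ s) :
    ENNReal.ofReal ((3 * ε / 4) ^ finrank ℝ K - (ε / 2) ^ finrank ℝ K)
        * volume (ball (0 : K) 1)
        * (ENNReal.ofReal (δ ^ finrank ℝ Kᗮ) * volume (ball (0 : Kᗮ) 1)) ≤ volume s := by
  have hsub' : (ball (0 : K) (3 * ε / 4) \ ball (0 : K) (ε / 2)) ×ˢ (ball (0 : Kᗮ) δ)
      ⊆ (fun p : K × Kᗮ => (p.1 : E n) + (p.2 : E n)) ⁻¹' s := by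
    rintro ⟨u, vv⟩ ⟨⟨h1, h2⟩, h3⟩
    rw [Set.mem_preimage]
    rw [mem_ball_zero_iff] at h1 h3
    rw [mem_ball_zero_iff] at h2
    push_neg at h2
    exact hsub u vv h1 h2 h3
  have h38 : ε / 2 ≤ 3 * ε / 4 := by linarith
  have e1 : volume (ball (0 : K) (3 * ε / 4))
      = ENNReal.ofReal ((3 * ε / 4) ^ finrank ℝ K) * volume (ball (0 : K) 1) :=
    vol_ball K (by linarith)
  have e2 : volume (ball (0 : K) (ε / 2))
      = ENNReal.ofReal ((ε / 2) ^ finrank ℝ K) * volume (ball (0 : K) 1) :=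
    vol_ball K (by linarith)
  have e3 : volume (ball (0 : Kᗮ) δ)
      = ENNReal.ofReal (δ ^ finrank ℝ Kᗮ) * volume (ball (0 : Kᗮ) 1) := vol_ball Kᗮ hδ
  have ediff : volume (ball (0 : K) (3 * ε / 4) \ ball (0 : K) (ε / 2))
      = ENNReal.ofReal ((3 * ε / 4) ^ finrank ℝ K - (ε / 2) ^ finrank ℝ K)
        * volume (ball (0 : K) 1) := by
    rw [measure_diff (ball_subset_ball h38) measurableSet_ball.nullMeasurableSet
      measure_ball_lt_top.ne, e1, e2, ENNReal.ofReal_sub _ (by positivity),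
      ENNReal.sub_mul (fun _ _ => (measure_ball_lt_top).ne)]
  calc ENNReal.ofReal ((3 * ε / 4) ^ finrank ℝ K - (ε / 2) ^ finrank ℝ K)
        * volume (ball (0 : K) 1)
        * (ENNReal.ofReal (δ ^ finrank ℝ Kᗮ) * volume (ball (0 : Kᗮ) 1))
      = volume (ball (0 : K) (3 * ε / 4) \ ball (0 : K) (ε / 2)) * volume (ball (0 : Kᗮ) δ) := by
        rw [ediff, e3]
    _ ≤ ((volume : Measure K).prod (volume : Measure Kᗮ))
          ((ball (0 : K) (3 * ε / 4) \ ball (0 : K) (ε / 2)) ×ˢ (ball (0 : Kᗮ) δ)) := by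
        rw [Measure.prod_prod]
    _ ≤ ((volume : Measure K).prod (volume : Measure Kᗮ))
          ((fun p : K × Kᗮ => (p.1 : E n) + (p.2 : E n)) ⁻¹' s) := measure_mono hsub'
    _ = volume s := (measurePreserving_add K).measure_preimage hs.nullMeasurableSet

lemma measurableSet_STg {d : ℝ} (hd : 0 ≤ d) (C : ℝ) (A : Set (E n)) :
    MeasurableSet (STg n d C A) := by
  have h : Continuous (fun x : E n => C * ‖x‖ ^ d) :=
    continuous_const.mul (continuous_norm.rpow_const (fun x => Or.inr hd))
  exact (isClosed_le (continuous_infDist_pt _) h).measurableSet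

lemma tendsto_rpow_zero {e : ℝ} (he : 0 < e) :
    Tendsto (fun ε : ℝ => ε ^ e) (𝓝[>] (0:ℝ)) (𝓝 0) := by
  have h := (Real.continuousAt_rpow_const 0 e (Or.inr he.le)).tendsto
  rw [Real.zero_rpow he.ne'] at h
  exact h.mono_left nhdsWithin_le_nhds

end STAux

set_option maxHeartbeats 1000000 in
theorem stmt13 (n : ℕ) (α β : Submodule ℝ (E n))
    (hdim : Module.finrank ℝ α < Module.finrank ℝ β)
    (d C₁ C₂ : ℝ) (hd : 1 < d) (h1 : 0 < C₁) (h2 : 0 < C₂) :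
    Tendsto (fun ε : ℝ =>
        volume (STg n d C₁ (α : Set (E n)) ∩ ball (0 : E n) ε) /
        volume (STg n d C₂ (β : Set (E n)) ∩ ball (0 : E n) ε))
      (𝓝[>] (0:ℝ)) (nhds 0) := by
  classical
  open Module in
  set k1 := Module.finrank ℝ α with hk1_def
  set k2 := Module.finrank ℝ αᗮ with hk2_def
  set m1 := Module.finrank ℝ β with hm1_def
  set m2 := Module.finrank ℝ βᗮ with hm2_def
  have hkn : k1 + k2 = n := by
    simpa using Submodule.finrank_add_finrank_orthogonal α
  have hmn : m1 + m2 = n := by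
    simpa using Submodule.finrank_add_finrank_orthogonal β
  have hm1pos : 0 < m1 := lt_of_le_of_lt (Nat.zero_le _) hdim
  set w : ℝ := (3/4:ℝ) ^ m1 - (1/2:ℝ) ^ m1 with hw_def
  have hwpos : 0 < w := by
    rw [hw_def]
    have : ((1:ℝ)/2) ^ m1 < ((3:ℝ)/4) ^ m1 :=
      pow_lt_pow_left₀ (by norm_num) (by norm_num) hm1pos.ne'
    linarith
  set a : ℝ → ℝ := fun ε => ε ^ k1 * (C₁ * ε ^ d) ^ k2 with ha_def
  set b : ℝ → ℝ := fun ε => ((3*ε/4) ^ m1 - (ε/2) ^ m1) * (C₂ * (ε/2) ^ d) ^ m2 with hb_def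
  set c : ENNReal := volume (ball (0:α) 1) * volume (ball (0:αᗮ) 1) with hc_def
  set c' : ENNReal := volume (ball (0:β) 1) * volume (ball (0:βᗮ) 1) with hc'_def
  have hctop : c ≠ ⊤ := by
    rw [hc_def]; exact (ENNReal.mul_lt_top measure_ball_lt_top measure_ball_lt_top).ne
  have hc'0 : c' ≠ 0 := by
    rw [hc'_def]
    exact mul_ne_zero (measure_ball_pos volume 0 one_pos).ne'
      (measure_ball_pos volume 0 one_pos).ne'
  have hc'top : c' ≠ ⊤ := by
    rw [hc'_def]; exact (ENNReal.mul_lt_top measure_ball_lt_top measure_ball_lt_top).ne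
  have hcctop : c / c' ≠ ⊤ := (ENNReal.div_lt_top hctop hc'0).ne
  -- the smallness condition holds eventually
  have hsmall : ∀ᶠ ε in 𝓝[>] (0:ℝ), C₂ * (ε/2) ^ d ≤ ε / 4 := by
    have h0 : Tendsto (fun ε : ℝ => C₂ * (ε/2) ^ (d-1)) (𝓝[>] (0:ℝ)) (𝓝 0) := by
      have hhalf : Tendsto (fun ε : ℝ => ε/2) (𝓝[>] (0:ℝ)) (𝓝[>] (0:ℝ)) := by
        apply tendsto_nhdsWithin_of_tendsto_nhds_of_eventually_within
        · have hdiv : Tendsto (fun ε : ℝ => ε / 2) (𝓝 (0:ℝ)) (𝓝 ((0:ℝ)/2)) :=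
            tendsto_id.div_const 2
          rw [zero_div] at hdiv
          exact hdiv.mono_left nhdsWithin_le_nhds
        · filter_upwards [self_mem_nhdsWithin] with x hx
          exact div_pos hx (by norm_num : (0:ℝ) < 2)
      have h2 := (STAux.tendsto_rpow_zero (by linarith : (0:ℝ) < d - 1)).comp hhalf
      have h3 := h2.const_mul C₂
      simpa using h3
    have h3 : ∀ᶠ ε in 𝓝[>] (0:ℝ), C₂ * (ε/2) ^ (d-1) < 1/2 :=
      h0.eventually_lt_const (by norm_num)
    filter_upwards [h3, self_mem_nhdsWithin] with ε h4 hε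
    simp only [Set.mem_Ioi] at hε
    have hhalf : (0:ℝ) < ε/2 := by linarith
    have heq : (ε/2:ℝ) ^ d = (ε/2) ^ (d-1) * (ε/2) := by
      have h5 := Real.rpow_add hhalf (d-1) 1
      rw [Real.rpow_one] at h5
      have h6 : d - 1 + 1 = d := by ring
      rw [h6] at h5
      exact h5
    calc C₂ * (ε/2) ^ d = (C₂ * (ε/2) ^ (d-1)) * (ε/2) := by rw [heq]; ring
      _ ≤ (1/2) * (ε/2) := mul_le_mul_of_nonneg_right h4.le (by linarith)
      _ = ε / 4 := by ring
  -- main eventual bound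
  have hbound : ∀ᶠ ε in 𝓝[>] (0:ℝ),
      volume (STg n d C₁ (α : Set (E n)) ∩ ball (0 : E n) ε) /
        volume (STg n d C₂ (β : Set (E n)) ∩ ball (0 : E n) ε)
      ≤ ENNReal.ofReal (a ε / b ε) * (c / c') := by
    filter_upwards [self_mem_nhdsWithin, hsmall] with ε hε hsm
    simp only [Set.mem_Ioi] at hε
    have hεd : (0:ℝ) < ε ^ d := Real.rpow_pos_of_pos hε d
    have hδ2 : (0:ℝ) < C₂ * (ε/2) ^ d := by positivity
    -- numerator
    have hnum : volume (STg n d C₁ (α : Set (E n)) ∩ ball (0 : E n) ε)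
        ≤ ENNReal.ofReal (a ε) * c := by
      have hsub : STg n d C₁ (α : Set (E n)) ∩ ball (0 : E n) ε
          ⊆ {x : E n | Metric.infDist x (α : Set (E n)) ≤ C₁ * ε ^ d} ∩ ball 0 ε := by
        rintro x ⟨hx1, hx2⟩
        refine ⟨?_, hx2⟩
        simp only [STg, Set.mem_setOf_eq] at hx1 ⊢
        have hxε : ‖x‖ < ε := mem_ball_zero_iff.1 hx2
        have hle : ‖x‖ ^ d ≤ ε ^ d :=
          Real.rpow_le_rpow (norm_nonneg x) hxε.le (by linarith)
        exact le_trans hx1 (mul_le_mul_of_nonneg_left hle h1.le)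
      refine le_trans (measure_mono hsub) ?_
      refine le_trans (STAux.tube_upper α (by positivity) hε) (le_of_eq ?_)
      rw [ha_def, hc_def]
      simp only []
      rw [ENNReal.ofReal_mul (by positivity : (0:ℝ) ≤ ε ^ k1)]
      ring
    -- denominator
    have hden : ENNReal.ofReal (b ε) * c'
        ≤ volume (STg n d C₂ (β : Set (E n)) ∩ ball (0 : E n) ε) := by
      have hmeas : MeasurableSet (STg n d C₂ (β : Set (E n)) ∩ ball (0 : E n) ε) :=
        (STAux.measurableSet_STg (by linarith) C₂ _).inter measurableSet_ball
      have hinc : ∀ (u : β) (v : βᗮ), ‖u‖ < 3 * ε / 4 → ε / 2 ≤ ‖u‖ →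
          ‖v‖ < C₂ * (ε/2) ^ d →
          (u : E n) + (v : E n) ∈ STg n d C₂ (β : Set (E n)) ∩ ball (0 : E n) ε := by
        intro u v hu1 hu2 hv
        have hnorm_add : ‖(u : E n) + (v : E n)‖ ≤ ‖u‖ + ‖v‖ := norm_add_le _ _
        have hxlt : ‖(u : E n) + (v : E n)‖ < ε := by
          have : ‖v‖ < ε / 4 := lt_of_lt_of_le hv hsm
          calc ‖(u : E n) + (v : E n)‖ ≤ ‖u‖ + ‖v‖ := hnorm_add
            _ < 3 * ε / 4 + ε / 4 := by linarith
            _ = ε := by ring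
        have hge : ε / 2 ≤ ‖(u : E n) + (v : E n)‖ :=
          le_trans hu2 (STAux.norm_fst_le β u v)
        refine ⟨?_, mem_ball_zero_iff.2 hxlt⟩
        simp only [STg, Set.mem_setOf_eq]
        rw [STAux.infDist_add]
        have hrle : (ε/2 : ℝ) ^ d ≤ ‖(u : E n) + (v : E n)‖ ^ d :=
          Real.rpow_le_rpow (by linarith) hge (by linarith)
        calc (‖v‖ : ℝ) ≤ C₂ * (ε/2) ^ d := hv.le
          _ ≤ C₂ * ‖(u : E n) + (v : E n)‖ ^ d := mul_le_mul_of_nonneg_left hrle h2.le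
      have hlow := STAux.tube_lower β hmeas hε hδ2 hinc
      refine le_trans (le_of_eq ?_) hlow
      rw [hb_def, hc'_def]
      simp only []
      rw [ENNReal.ofReal_mul (by
        have : (ε/2:ℝ) ^ m1 ≤ (3*ε/4) ^ m1 := pow_le_pow_left₀ (by linarith) (by linarith) m1
        linarith)]
      ring
    have hbpos : 0 < b ε := by
      rw [hb_def]
      simp only []
      have h5 : (ε/2:ℝ) ^ m1 < (3*ε/4) ^ m1 :=
        pow_lt_pow_left₀ (by linarith) (by linarith) hm1pos.ne'
      have h6 : (0:ℝ) < (C₂ * (ε/2) ^ d) ^ m2 := pow_pos hδ2 m2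
      nlinarith
    calc volume (STg n d C₁ (α : Set (E n)) ∩ ball (0 : E n) ε) /
          volume (STg n d C₂ (β : Set (E n)) ∩ ball (0 : E n) ε)
        ≤ (ENNReal.ofReal (a ε) * c) / (ENNReal.ofReal (b ε) * c') :=
          ENNReal.div_le_div hnum hden
      _ = ENNReal.ofReal (a ε / b ε) * (c / c') := by
          rw [ENNReal.ofReal_div_of_pos hbpos, div_eq_mul_inv, div_eq_mul_inv, div_eq_mul_inv,
            ENNReal.mul_inv (Or.inr hc'top) (Or.inl ENNReal.ofReal_ne_top)]
          ring
  -- the bound tends to zero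
  have hreal : Tendsto (fun ε => a ε / b ε) (𝓝[>] (0:ℝ)) (𝓝 0) := by
    set e : ℝ := (d-1) * ((m1:ℝ) - (k1:ℝ)) with he_def
    have hepos : 0 < e := by
      rw [he_def]
      have : (k1:ℝ) < (m1:ℝ) := by exact_mod_cast hdim
      have hd1 : (0:ℝ) < d - 1 := by linarith
      nlinarith
    set KK : ℝ := C₁ ^ k2 / (w * (C₂ / (2:ℝ) ^ d) ^ m2) with hKK_def
    have hmain : ∀ᶠ ε in 𝓝[>] (0:ℝ), KK * ε ^ e = a ε / b ε := by
      filter_upwards [self_mem_nhdsWithin] with ε hε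
      simp only [Set.mem_Ioi] at hε
      have h2d : (0:ℝ) < (2:ℝ) ^ d := Real.rpow_pos_of_pos two_pos d
      have ha : a ε = C₁ ^ k2 * ε ^ ((k1:ℝ) + d * (k2:ℝ)) := by
        rw [ha_def]
        simp only []
        rw [Real.rpow_add hε, Real.rpow_natCast, Real.rpow_mul hε.le, Real.rpow_natCast]
        ring
      have hb : b ε = (w * (C₂ / (2:ℝ) ^ d) ^ m2) * ε ^ ((m1:ℝ) + d * (m2:ℝ)) := by
        rw [hb_def, hw_def]
        simp only []
        have hquot : (ε/2:ℝ) ^ d = ε ^ d / (2:ℝ) ^ d :=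
          Real.div_rpow hε.le (by norm_num : (0:ℝ) ≤ 2) d
        rw [hquot, Real.rpow_add hε, Real.rpow_natCast, Real.rpow_mul hε.le, Real.rpow_natCast]
        ring
      have hεA : ε ^ ((k1:ℝ) + d * (k2:ℝ)) = ε ^ e * ε ^ ((m1:ℝ) + d * (m2:ℝ)) := by
        rw [← Real.rpow_add hε]
        congr 1
        have hkn' : (k1:ℝ) + (k2:ℝ) = (n:ℝ) := by exact_mod_cast hkn
        have hmn' : (m1:ℝ) + (m2:ℝ) = (n:ℝ) := by exact_mod_cast hmn
        rw [he_def]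
        linear_combination d * hkn' - d * hmn'
      rw [ha, hb, hεA, hKK_def]
      have hεne : ε ^ ((m1:ℝ) + d * (m2:ℝ)) ≠ 0 := (Real.rpow_pos_of_pos hε _).ne'
      rw [show C₁ ^ k2 * (ε ^ e * ε ^ ((m1:ℝ) + d * (m2:ℝ)))
          = (C₁ ^ k2 * ε ^ e) * ε ^ ((m1:ℝ) + d * (m2:ℝ)) by ring,
        mul_div_mul_right _ _ hεne, div_mul_eq_mul_div]
    have h5 : Tendsto (fun ε : ℝ => KK * ε ^ e) (𝓝[>] (0:ℝ)) (𝓝 0) := by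
      have := (STAux.tendsto_rpow_zero hepos).const_mul KK
      simpa using this
    exact h5.congr' hmain
  have htb : Tendsto (fun ε => ENNReal.ofReal (a ε / b ε) * (c / c'))
      (𝓝[>] (0:ℝ)) (𝓝 0) := by
    have h6 : Tendsto (fun ε => ENNReal.ofReal (a ε / b ε)) (𝓝[>] (0:ℝ)) (𝓝 0) := by
      have := ENNReal.tendsto_ofReal hreal
      simpa using this
    have h7 := ENNReal.Tendsto.mul_const h6 (Or.inr hcctop)
    simpa using h7
  exact tendsto_of_tendsto_of_tendsto_of_le_of_le' tendsto_const_nhds htb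
    (Filter.Eventually.of_forall fun _ => zero_le) hbound
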